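/- If ⟪-,-⟫ is a double bracket on A associated with the right bimodule structure, then its (12)-weak double Jacobiator wk(a,b,c) := ⟪a,b,c⟫ - τ_{(12)}⟪b,a,c⟫ satisfies wk(a,b,c₁c₂) = (1⊗1⊗c₁)·wk(a,b,c₂) + wk(a,b,c₁)·(1⊗1⊗c₂) for all a,b,c₁,c₂ ∈ A (products on A⊗A⊗A taken factorwise), and it is a derivation in each of its three entries. Consequently, ⟪-,-⟫ is (12)-weak Poisson if and only if wk(s,t,u) = 0 for all s,t,u in any generating set of A. -/

import Mathlib

open scoped TensorProduct

noncomputable section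

/-- A (`k`-linear) `A`-bimodule-type structure on a `k`-module `M`,
given by a three-slot action `a · d · b`. -/
structure BimodOn (k A M : Type*) [CommSemiring k] [Ring A] [Algebra k A]
    [AddCommMonoid M] [Module k M] where
  act : A → M → A → M
  add_left : ∀ (a a' : A) (d : M) (b : A), act (a + a') d b = act a d b + act a' d b
  add_mid : ∀ (a : A) (d d' : M) (b : A), act a (d + d') b = act a d b + act a d' b
  add_right : ∀ (a : A) (d : M) (b b' : A), act a d (b + b') = act a d b + act a d b'
  smul_left : ∀ (c : k) (a : A) (d : M) (b : A), act (c • a) d b = c • act a d b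
  smul_mid : ∀ (c : k) (a : A) (d : M) (b : A), act a (c • d) b = c • act a d b
  smul_right : ∀ (c : k) (a : A) (d : M) (b : A), act a d (c • b) = c • act a d b
  act_one_one : ∀ d : M, act 1 d 1 = d
  act_mul : ∀ (a a' : A) (d : M) (b b' : A), act a (act a' d b') b = act (a * a') d (b' * b)

/-- An `A`-bimodule structure on `A ⊗[k] A`. -/
abbrev BimodStr (k A : Type*) [CommSemiring k] [Ring A] [Algebra k A] :=
  BimodOn k A (A ⊗[k] A)

section Defs

variable (k A : Type*) [CommSemiring k] [Ring A] [Algebra k A]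

/-- The swap automorphism `°` of `A ⊗[k] A`, `a ⊗ b ↦ b ⊗ a`. -/
def swapT : A ⊗[k] A →ₗ[k] A ⊗[k] A := (TensorProduct.comm k A A).toLinearMap

variable {k A}

namespace BimodOn

/-- The swap bimodule structure `a * d * b = (a · d° · b)°` associated with a
bimodule structure on `A ⊗[k] A`. -/
def star (S : BimodStr k A) (a : A) (d : A ⊗[k] A) (b : A) : A ⊗[k] A :=
  swapT k A (S.act a (swapT k A d) b)

/-- A bimodule structure on `A ⊗[k] A` is swap-commuting if it commutes with its
swap bimodule structure. -/
def SwapCommuting (S : BimodStr k A) : Prop :=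
  ∀ (a₁ a₂ b₁ b₂ : A) (d : A ⊗[k] A),
    S.act a₁ (S.star a₂ d b₂) b₁ = S.star a₂ (S.act a₁ d b₁) b₂

end BimodOn

end Defs

/-- A double bracket on `A` associated with a bimodule structure `S` on `A ⊗[k] A`
(with swap bimodule structure `S.star`). -/
structure DoubleBracket {k A : Type*} [CommSemiring k] [Ring A] [Algebra k A]
    (S : BimodStr k A) where
  br : A →ₗ[k] A →ₗ[k] A ⊗[k] A
  antisymm : ∀ a b : A, br a b = - swapT k A (br b a)
  leibniz_right : ∀ a b c : A, br a (b * c) = S.act b (br a c) 1 + S.act 1 (br a b) c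
  leibniz_left : ∀ a b c : A, br (b * c) a = S.star b (br c a) 1 + S.star 1 (br b a) c

section Taus

variable (k A : Type*) [CommSemiring k] [Ring A] [Algebra k A]

/-- `τ_{(123)}` on `A^{⊗3}`: `a ⊗ b ⊗ c ↦ c ⊗ a ⊗ b`. -/
def tau123 : (A ⊗[k] A) ⊗[k] A →ₗ[k] (A ⊗[k] A) ⊗[k] A :=
  ((TensorProduct.comm k (A ⊗[k] A) A).trans (TensorProduct.assoc k A A A).symm).toLinearMap

/-- `τ_{(132)}` on `A^{⊗3}`: `a ⊗ b ⊗ c ↦ b ⊗ c ⊗ a`. -/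
def tau132 : (A ⊗[k] A) ⊗[k] A →ₗ[k] (A ⊗[k] A) ⊗[k] A :=
  ((TensorProduct.assoc k A A A).trans (TensorProduct.comm k A (A ⊗[k] A))).toLinearMap

/-- `τ_{(12)}` on `A^{⊗3}`: `a ⊗ b ⊗ c ↦ b ⊗ a ⊗ c`. -/
def tau12 : (A ⊗[k] A) ⊗[k] A →ₗ[k] (A ⊗[k] A) ⊗[k] A :=
  (TensorProduct.congr (TensorProduct.comm k A A) (LinearEquiv.refl k A)).toLinearMap

variable {k A}

/-- `⟪a, -⟫_L : A ⊗ A → A ⊗ A ⊗ A`, `b₁ ⊗ b₂ ↦ ⟪a, b₁⟫ ⊗ b₂`. -/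
def trL (br : A →ₗ[k] A →ₗ[k] A ⊗[k] A) (a : A) :
    A ⊗[k] A →ₗ[k] (A ⊗[k] A) ⊗[k] A :=
  TensorProduct.map (br a) LinearMap.id

/-- The double Jacobiator of a bilinear operation `A × A → A ⊗ A`:
`⟪a,b,c⟫ = ⟪a,⟪b,c⟫⟫_L + τ_{(123)} ⟪b,⟪c,a⟫⟫_L + τ_{(132)} ⟪c,⟪a,b⟫⟫_L`. -/
def jac (br : A →ₗ[k] A →ₗ[k] A ⊗[k] A) (a b c : A) : (A ⊗[k] A) ⊗[k] A :=
  trL br a (br b c) + tau123 k A (trL br b (br c a)) + tau132 k A (trL br c (br a b))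

end Taus

end

/-! ### Auxiliary development for the main theorem -/

noncomputable section WkAuxDefs

variable (k A : Type*) [CommRing k] [Ring A] [Algebra k A]

/-- Embed `A ⊗ A` into tensor slots 1,2 of `(A ⊗ A) ⊗ A`. -/
def i12T : A ⊗[k] A →ₗ[k] (A ⊗[k] A) ⊗[k] A :=
  (TensorProduct.mk k (A ⊗[k] A) A).flip 1

/-- Embed `A ⊗ A` into tensor slots 2,3 of `(A ⊗ A) ⊗ A`. -/
def i23T : A ⊗[k] A →ₗ[k] (A ⊗[k] A) ⊗[k] A :=
  (TensorProduct.assoc k A A A).symm.toLinearMap ∘ₗ TensorProduct.mk k A (A ⊗[k] A) 1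

/-- `d₁ ⊗ d₂ ↦ (d₂ ⊗ 1) ⊗ d₁`. -/
def delT : A ⊗[k] A →ₗ[k] (A ⊗[k] A) ⊗[k] A := tau123 k A ∘ₗ i23T k A

end WkAuxDefs

section WkAux

variable {k A : Type*} [CommRing k] [Ring A] [Algebra k A]

@[simp] lemma swapT_tmul (a b : A) : swapT k A (a ⊗ₜ[k] b) = b ⊗ₜ[k] a := rfl

@[simp] lemma i12T_tmul (a b : A) :
    i12T k A (a ⊗ₜ[k] b) = (a ⊗ₜ[k] b) ⊗ₜ[k] (1 : A) := rfl

lemma i12T_apply (d : A ⊗[k] A) : i12T k A d = d ⊗ₜ[k] (1 : A) := rfl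

@[simp] lemma i23T_tmul (a b : A) :
    i23T k A (a ⊗ₜ[k] b) = ((1 : A) ⊗ₜ[k] a) ⊗ₜ[k] b := by
  simp [i23T]

@[simp] lemma tau123_tmul (a b c : A) :
    tau123 k A ((a ⊗ₜ[k] b) ⊗ₜ[k] c) = (c ⊗ₜ[k] a) ⊗ₜ[k] b := by simp [tau123]

@[simp] lemma tau132_tmul (a b c : A) :
    tau132 k A ((a ⊗ₜ[k] b) ⊗ₜ[k] c) = (b ⊗ₜ[k] c) ⊗ₜ[k] a := by simp [tau132]

@[simp] lemma tau12_tmul (a b c : A) :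
    tau12 k A ((a ⊗ₜ[k] b) ⊗ₜ[k] c) = (b ⊗ₜ[k] a) ⊗ₜ[k] c := by simp [tau12]

@[simp] lemma delT_tmul (a b : A) :
    delT k A (a ⊗ₜ[k] b) = (b ⊗ₜ[k] (1 : A)) ⊗ₜ[k] a := by simp [delT]

lemma swapT_eqA :
    (swapT k A) = (Algebra.TensorProduct.comm k A A).toLinearMap :=
  TensorProduct.ext' fun a b => by simp

lemma swapT_mul (x y : A ⊗[k] A) :
    swapT k A (x * y) = swapT k A x * swapT k A y := by
  rw [swapT_eqA]; simp only [AlgEquiv.toLinearMap_apply, map_mul]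

lemma swapT_swapT (x : A ⊗[k] A) : swapT k A (swapT k A x) = x := by
  have h : (swapT k A ∘ₗ swapT k A) = LinearMap.id (R := k) (M := A ⊗[k] A) :=
    TensorProduct.ext' fun a b => by simp
  exact LinearMap.congr_fun h x

lemma tau123_eqA :
    (tau123 k A) = ((Algebra.TensorProduct.comm k (A ⊗[k] A) A).trans
      (Algebra.TensorProduct.assoc k k k A A A).symm).toLinearMap :=
  TensorProduct.ext_threefold fun a b c => by simp

lemma tau123_mul (x y : (A ⊗[k] A) ⊗[k] A) :
    tau123 k A (x * y) = tau123 k A x * tau123 k A y := by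
  rw [tau123_eqA]; simp only [AlgEquiv.toLinearMap_apply, map_mul]

lemma tau132_eqA :
    (tau132 k A) = ((Algebra.TensorProduct.assoc k k k A A A).trans
      (Algebra.TensorProduct.comm k A (A ⊗[k] A))).toLinearMap :=
  TensorProduct.ext_threefold fun a b c => by simp

lemma tau132_mul (x y : (A ⊗[k] A) ⊗[k] A) :
    tau132 k A (x * y) = tau132 k A x * tau132 k A y := by
  rw [tau132_eqA]; simp only [AlgEquiv.toLinearMap_apply, map_mul]

lemma tau12_eqA :
    (tau12 k A) = (Algebra.TensorProduct.congr
      (Algebra.TensorProduct.comm k A A) (AlgEquiv.refl (R := k) (A₁ := A))).toLinearMap :=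
  TensorProduct.ext_threefold fun a b c => by
    simp [tau12, Algebra.TensorProduct.congr_apply]

lemma tau12_mul (x y : (A ⊗[k] A) ⊗[k] A) :
    tau12 k A (x * y) = tau12 k A x * tau12 k A y := by
  rw [tau12_eqA]; simp only [AlgEquiv.toLinearMap_apply, map_mul]

/- composition identities -/

lemma tau123_tau123 (x : (A ⊗[k] A) ⊗[k] A) :
    tau123 k A (tau123 k A x) = tau132 k A x :=
  LinearMap.congr_fun (TensorProduct.ext_threefold
    (g := tau123 k A ∘ₗ tau123 k A) (h := tau132 k A) fun a b c => by simp) x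

lemma tau132_tau123 (x : (A ⊗[k] A) ⊗[k] A) :
    tau132 k A (tau123 k A x) = x :=
  LinearMap.congr_fun (TensorProduct.ext_threefold
    (g := tau132 k A ∘ₗ tau123 k A) (h := LinearMap.id) fun a b c => by simp) x

lemma tau123_tau132 (x : (A ⊗[k] A) ⊗[k] A) :
    tau123 k A (tau132 k A x) = x :=
  LinearMap.congr_fun (TensorProduct.ext_threefold
    (g := tau123 k A ∘ₗ tau132 k A) (h := LinearMap.id) fun a b c => by simp) x

lemma tau132_tau132 (x : (A ⊗[k] A) ⊗[k] A) :
    tau132 k A (tau132 k A x) = tau123 k A x :=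
  LinearMap.congr_fun (TensorProduct.ext_threefold
    (g := tau132 k A ∘ₗ tau132 k A) (h := tau123 k A) fun a b c => by simp) x

lemma tauC2 (x : (A ⊗[k] A) ⊗[k] A) :
    tau132 k A (tau12 k A (tau123 k A x)) = tau12 k A (tau132 k A x) :=
  LinearMap.congr_fun (TensorProduct.ext_threefold
    (g := tau132 k A ∘ₗ tau12 k A ∘ₗ tau123 k A)
    (h := tau12 k A ∘ₗ tau132 k A) fun a b c => by simp) x

lemma tau123_i12 (d : A ⊗[k] A) : tau123 k A (i12T k A d) = i23T k A d :=
  LinearMap.congr_fun (TensorProduct.ext'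
    (g := tau123 k A ∘ₗ i12T k A) (h := i23T k A) fun a b => by simp) d

lemma tau123_i23 (d : A ⊗[k] A) : tau123 k A (i23T k A d) = delT k A d := rfl

lemma tau12_i23 (d : A ⊗[k] A) :
    tau12 k A (i23T k A d) = delT k A (swapT k A d) :=
  LinearMap.congr_fun (TensorProduct.ext'
    (g := tau12 k A ∘ₗ i23T k A) (h := delT k A ∘ₗ swapT k A) fun a b => by simp) d

lemma tau12_del (d : A ⊗[k] A) :
    tau12 k A (delT k A d) = i23T k A (swapT k A d) :=
  LinearMap.congr_fun (TensorProduct.ext'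
    (g := tau12 k A ∘ₗ delT k A) (h := i23T k A ∘ₗ swapT k A) fun a b => by simp) d

end WkAux

section WkBracket

variable {k A : Type*} [CommRing k] [Ring A] [Algebra k A]
variable {S : BimodStr k A} (D : DoubleBracket S)

/-- the "right" bimodule structure hypothesis -/
def RightStr (S : BimodStr k A) : Prop :=
  ∀ (a b : A) (d : A ⊗[k] A),
    S.act a d b = ((1 : A) ⊗ₜ[k] a) * d * ((1 : A) ⊗ₜ[k] b)

lemma br_right (hS : RightStr S) (a b c : A) :
    D.br a (b * c) = ((1 : A) ⊗ₜ[k] b) * D.br a c + D.br a b * ((1 : A) ⊗ₜ[k] c) := by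
  rw [D.leibniz_right a b c, hS, hS, ← Algebra.TensorProduct.one_def, mul_one, one_mul]

lemma star_eq (hS : RightStr S) (a : A) (d : A ⊗[k] A) (b : A) :
    S.star a d b = (a ⊗ₜ[k] (1 : A)) * d * (b ⊗ₜ[k] (1 : A)) := by
  unfold BimodOn.star
  rw [hS, swapT_mul, swapT_mul, swapT_tmul, swapT_tmul, swapT_swapT]

lemma br_left (hS : RightStr S) (a b c : A) :
    D.br (b * c) a = (b ⊗ₜ[k] (1 : A)) * D.br c a + D.br b a * (c ⊗ₜ[k] (1 : A)) := by
  rw [D.leibniz_left a b c, star_eq hS, star_eq hS, ← Algebra.TensorProduct.one_def,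
    mul_one, one_mul]

lemma trL_tmul (br : A →ₗ[k] A →ₗ[k] A ⊗[k] A) (a p q : A) :
    trL br a (p ⊗ₜ[k] q) = br a p ⊗ₜ[k] q := rfl

lemma trL_L1 (br : A →ₗ[k] A →ₗ[k] A ⊗[k] A) (a b : A) (x : A ⊗[k] A) :
    trL br a (((1 : A) ⊗ₜ[k] b) * x)
      = (((1 : A) ⊗ₜ[k] (1 : A)) ⊗ₜ[k] b) * trL br a x := by
  induction x using TensorProduct.induction_on with
  | zero => simp
  | tmul p q =>
      simp [trL, Algebra.TensorProduct.tmul_mul_tmul, ← Algebra.TensorProduct.one_def]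
  | add u v hu hv => simp only [mul_add, map_add, hu, hv]

lemma trL_L2 (br : A →ₗ[k] A →ₗ[k] A ⊗[k] A) (a c : A) (x : A ⊗[k] A) :
    trL br a (x * ((1 : A) ⊗ₜ[k] c))
      = trL br a x * (((1 : A) ⊗ₜ[k] (1 : A)) ⊗ₜ[k] c) := by
  induction x using TensorProduct.induction_on with
  | zero => simp
  | tmul p q =>
      simp [trL, Algebra.TensorProduct.tmul_mul_tmul, ← Algebra.TensorProduct.one_def]
  | add u v hu hv => simp only [add_mul, map_add, hu, hv]

lemma trL_L3 (hS : RightStr S) (b c : A) (x : A ⊗[k] A) :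
    trL D.br b ((c ⊗ₜ[k] (1 : A)) * x)
      = (((1 : A) ⊗ₜ[k] c) ⊗ₜ[k] (1 : A)) * trL D.br b x
        + i12T k A (D.br b c) * i23T k A x := by
  induction x using TensorProduct.induction_on with
  | zero => simp
  | tmul p q =>
      simp only [Algebra.TensorProduct.tmul_mul_tmul, trL_tmul, i12T_apply, i23T_tmul,
        one_mul, mul_one]
      rw [br_right D hS b c p, TensorProduct.add_tmul]
  | add u v hu hv =>
      simp only [mul_add, map_add, hu, hv]
      abel

lemma trL_L4 (hS : RightStr S) (b c : A) (x : A ⊗[k] A) :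
    trL D.br b (x * (c ⊗ₜ[k] (1 : A)))
      = i23T k A x * i12T k A (D.br b c)
        + trL D.br b x * (((1 : A) ⊗ₜ[k] c) ⊗ₜ[k] (1 : A)) := by
  induction x using TensorProduct.induction_on with
  | zero => simp
  | tmul p q =>
      simp only [Algebra.TensorProduct.tmul_mul_tmul, trL_tmul, i12T_apply, i23T_tmul,
        one_mul, mul_one]
      rw [br_right D hS b p c, TensorProduct.add_tmul]
  | add u v hu hv =>
      simp only [add_mul, map_add, hu, hv]
      abel

lemma trL_L5 (hS : RightStr S) (c₁ c₂ : A) (x : A ⊗[k] A) :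
    trL D.br (c₁ * c₂) x
      = ((c₁ ⊗ₜ[k] (1 : A)) ⊗ₜ[k] (1 : A)) * trL D.br c₂ x
        + trL D.br c₁ x * ((c₂ ⊗ₜ[k] (1 : A)) ⊗ₜ[k] (1 : A)) := by
  induction x using TensorProduct.induction_on with
  | zero => simp
  | tmul p q =>
      simp only [Algebra.TensorProduct.tmul_mul_tmul, trL_tmul, one_mul, mul_one]
      rw [br_left D hS p c₁ c₂, TensorProduct.add_tmul]
  | add u v hu hv =>
      simp only [mul_add, add_mul, map_add, hu, hv]
      abel

end WkBracket

/-- The `(12)`-weak double Jacobiator `wk(a,b,c) = ⟪a,b,c⟫ - τ_{(12)} ⟪b,a,c⟫`. -/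
noncomputable def wk12 {k A : Type*} [CommSemiring k] [Ring A] [Algebra k A]
    (br : A →ₗ[k] A →ₗ[k] A ⊗[k] A) (a b c : A) : (A ⊗[k] A) ⊗[k] A :=
  jac br a b c - tau12 k A (jac br b a c)

section WkMain

variable {k A : Type*} [CommRing k] [Ring A] [Algebra k A]
variable {S : BimodStr k A} (D : DoubleBracket S)

lemma jac_deriv3 (hS : RightStr S) (a b c₁ c₂ : A) :
    jac D.br a b (c₁ * c₂)
      = (((1 : A) ⊗ₜ[k] (1 : A)) ⊗ₜ[k] c₁) * jac D.br a b c₂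
        + jac D.br a b c₁ * (((1 : A) ⊗ₜ[k] (1 : A)) ⊗ₜ[k] c₂)
        + (i23T k A (D.br b c₁) * delT k A (D.br c₂ a)
            + delT k A (D.br c₁ a) * i23T k A (D.br b c₂)) := by
  unfold jac
  rw [br_right D hS b c₁ c₂, br_left D hS a c₁ c₂]
  simp only [map_add, trL_L1, trL_L2, trL_L3 D hS, trL_L4 D hS, trL_L5 D hS,
    tau123_mul, tau132_mul, tau123_tmul, tau132_tmul, tau123_i12, tau123_i23,
    mul_add, add_mul, one_mul, mul_one]
  abel

lemma cross_symm (a b c₁ c₂ : A) :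
    i23T k A (D.br b c₁) * delT k A (D.br c₂ a)
      + delT k A (D.br c₁ a) * i23T k A (D.br b c₂)
    = tau12 k A (i23T k A (D.br a c₁) * delT k A (D.br c₂ b)
        + delT k A (D.br c₁ b) * i23T k A (D.br a c₂)) := by
  have hsw : ∀ x y : A, swapT k A (D.br x y) = ((-1 : k)) • D.br y x := by
    intro x y
    have h2 : swapT k A (D.br x y) = - D.br y x :=
      calc swapT k A (D.br x y)
          = swapT k A (- swapT k A (D.br y x)) := congrArg (swapT k A) (D.antisymm x y)
        _ = - swapT k A (swapT k A (D.br y x)) := map_neg _ _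
        _ = - D.br y x := by rw [swapT_swapT]
    have h3 : ((-1 : k)) • D.br y x = - D.br y x := neg_one_smul k (D.br y x)
    exact h2.trans h3.symm
  rw [map_add, tau12_mul, tau12_mul, tau12_i23, tau12_del, tau12_i23, tau12_del,
    hsw, hsw, hsw, hsw]
  simp only [map_smul, smul_mul_smul_comm, neg_mul_neg, mul_one, one_smul]
  rw [add_comm]

lemma wk_deriv3 (hS : RightStr S) (a b c₁ c₂ : A) :
    wk12 D.br a b (c₁ * c₂)
      = (((1 : A) ⊗ₜ[k] (1 : A)) ⊗ₜ[k] c₁) * wk12 D.br a b c₂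
        + wk12 D.br a b c₁ * (((1 : A) ⊗ₜ[k] (1 : A)) ⊗ₜ[k] c₂) := by
  unfold wk12
  rw [jac_deriv3 D hS a b c₁ c₂, jac_deriv3 D hS b a c₁ c₂, map_add, map_add,
    tau12_mul, tau12_mul, tau12_tmul, tau12_tmul, ← cross_symm D a b c₁ c₂]
  simp only [mul_sub, sub_mul]
  abel

lemma jac_cyc (br : A →ₗ[k] A →ₗ[k] A ⊗[k] A) (a b c : A) :
    jac br a b c = tau123 k A (jac br b c a) := by
  unfold jac
  rw [map_add, map_add, tau123_tau123, tau123_tau132]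
  abel

lemma wk_cyc132 (br : A →ₗ[k] A →ₗ[k] A ⊗[k] A) (a b c : A) :
    wk12 br a b c = tau132 k A (wk12 br c a b) := by
  unfold wk12
  rw [map_sub]
  have h1 : tau132 k A (jac br c a b) = jac br a b c := by
    rw [jac_cyc br c a b, tau132_tau123]
  have h2 : tau132 k A (tau12 k A (jac br a c b)) = tau12 k A (jac br b a c) := by
    rw [jac_cyc br a c b, tauC2]
    congr 1
    rw [jac_cyc br b a c, jac_cyc br a c b, tau123_tau123]
  rw [h1, h2]

lemma wk_cyc123 (br : A →ₗ[k] A →ₗ[k] A ⊗[k] A) (a b c : A) :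
    wk12 br a b c = tau123 k A (wk12 br b c a) := by
  rw [wk_cyc132 br a b c, wk_cyc132 br c a b, tau132_tau132]

lemma wk_deriv2 (hS : RightStr S) (a b₁ b₂ c : A) :
    wk12 D.br a (b₁ * b₂) c
      = (((1 : A) ⊗ₜ[k] b₁) ⊗ₜ[k] (1 : A)) * wk12 D.br a b₂ c
        + wk12 D.br a b₁ c * (((1 : A) ⊗ₜ[k] b₂) ⊗ₜ[k] (1 : A)) := by
  rw [wk_cyc132 D.br a (b₁ * b₂) c, wk_deriv3 D hS c a b₁ b₂, map_add, tau132_mul,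
    tau132_mul, tau132_tmul, tau132_tmul, ← wk_cyc132 D.br a b₂ c,
    ← wk_cyc132 D.br a b₁ c]

lemma wk_deriv1 (hS : RightStr S) (a₁ a₂ b c : A) :
    wk12 D.br (a₁ * a₂) b c
      = ((a₁ ⊗ₜ[k] (1 : A)) ⊗ₜ[k] (1 : A)) * wk12 D.br a₂ b c
        + wk12 D.br a₁ b c * ((a₂ ⊗ₜ[k] (1 : A)) ⊗ₜ[k] (1 : A)) := by
  rw [wk_cyc123 D.br (a₁ * a₂) b c, wk_deriv3 D hS b c a₁ a₂, map_add, tau123_mul,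
    tau123_mul, tau123_tmul, tau123_tmul, ← wk_cyc123 D.br a₂ b c,
    ← wk_cyc123 D.br a₁ b c]

lemma wk_add3 (br : A →ₗ[k] A →ₗ[k] A ⊗[k] A) (a b c c' : A) :
    wk12 br a b (c + c') = wk12 br a b c + wk12 br a b c' := by
  simp only [wk12, jac, trL, map_add, LinearMap.add_apply, TensorProduct.map_add_left]
  abel

lemma wk_smul3 (br : A →ₗ[k] A →ₗ[k] A ⊗[k] A) (r : k) (a b c : A) :
    wk12 br a b (r • c) = r • wk12 br a b c := by
  simp only [wk12, jac, trL, map_add, map_smul, LinearMap.smul_apply,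
    TensorProduct.map_smul_left, smul_add, smul_sub]

lemma wk_add2 (br : A →ₗ[k] A →ₗ[k] A ⊗[k] A) (a b b' c : A) :
    wk12 br a (b + b') c = wk12 br a b c + wk12 br a b' c := by
  simp only [wk12, jac, trL, map_add, LinearMap.add_apply, TensorProduct.map_add_left]
  abel

lemma wk_smul2 (br : A →ₗ[k] A →ₗ[k] A ⊗[k] A) (r : k) (a b c : A) :
    wk12 br a (r • b) c = r • wk12 br a b c := by
  simp only [wk12, jac, trL, map_add, map_smul, LinearMap.smul_apply,
    TensorProduct.map_smul_left, smul_add, smul_sub]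

lemma wk_add1 (br : A →ₗ[k] A →ₗ[k] A ⊗[k] A) (a a' b c : A) :
    wk12 br (a + a') b c = wk12 br a b c + wk12 br a' b c := by
  simp only [wk12, jac, trL, map_add, LinearMap.add_apply, TensorProduct.map_add_left]
  abel

lemma wk_smul1 (br : A →ₗ[k] A →ₗ[k] A ⊗[k] A) (r : k) (a b c : A) :
    wk12 br (r • a) b c = r • wk12 br a b c := by
  simp only [wk12, jac, trL, map_add, map_smul, LinearMap.smul_apply,
    TensorProduct.map_smul_left, smul_add, smul_sub]

lemma wk_one3 (hS : RightStr S) (a b : A) : wk12 D.br a b 1 = 0 := by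
  have e : (((1 : A) ⊗ₜ[k] (1 : A)) ⊗ₜ[k] (1 : A)) = (1 : (A ⊗[k] A) ⊗[k] A) := rfl
  have h := wk_deriv3 D hS a b 1 1
  simp only [mul_one, one_mul, e] at h
  have h3 := congrArg (fun z => z - wk12 D.br a b 1) h
  simp only [add_sub_cancel_right, sub_self] at h3
  exact h3.symm

lemma wk_one2 (hS : RightStr S) (a c : A) : wk12 D.br a 1 c = 0 := by
  have e : (((1 : A) ⊗ₜ[k] (1 : A)) ⊗ₜ[k] (1 : A)) = (1 : (A ⊗[k] A) ⊗[k] A) := rfl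
  have h := wk_deriv2 D hS a 1 1 c
  simp only [mul_one, one_mul, e] at h
  have h3 := congrArg (fun z => z - wk12 D.br a 1 c) h
  simp only [add_sub_cancel_right, sub_self] at h3
  exact h3.symm

lemma wk_one1 (hS : RightStr S) (b c : A) : wk12 D.br 1 b c = 0 := by
  have e : (((1 : A) ⊗ₜ[k] (1 : A)) ⊗ₜ[k] (1 : A)) = (1 : (A ⊗[k] A) ⊗[k] A) := rfl
  have h := wk_deriv1 D hS 1 1 b c
  simp only [mul_one, one_mul, e] at h
  have h3 := congrArg (fun z => z - wk12 D.br 1 b c) h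
  simp only [add_sub_cancel_right, sub_self] at h3
  exact h3.symm

end WkMain

/-- Lemma `R-wJac`: for a double bracket associated with the right
bimodule structure `a · d · b = d' ⊗ a d'' b`, the `(12)`-weak double Jacobiator is a
derivation in each of its three entries, and the double bracket is `(12)`-weak Poisson
iff the `(12)`-weak double Jacobiator vanishes on any generating set. -/
theorem right_weak_jacobiator_derivation
    {k A : Type*} [Field k] [CharZero k] [Ring A] [Algebra k A]
    (S : BimodStr k A)
    (hS : ∀ (a b : A) (d : A ⊗[k] A),
      S.act a d b = ((1 : A) ⊗ₜ[k] a) * d * ((1 : A) ⊗ₜ[k] b))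
    (D : DoubleBracket S) :
    (∀ a b c₁ c₂ : A, wk12 D.br a b (c₁ * c₂)
      = (((1 : A) ⊗ₜ[k] (1 : A)) ⊗ₜ[k] c₁) * wk12 D.br a b c₂
        + wk12 D.br a b c₁ * (((1 : A) ⊗ₜ[k] (1 : A)) ⊗ₜ[k] c₂)) ∧
    (∀ a b₁ b₂ c : A, wk12 D.br a (b₁ * b₂) c
      = (((1 : A) ⊗ₜ[k] b₁) ⊗ₜ[k] (1 : A)) * wk12 D.br a b₂ c
        + wk12 D.br a b₁ c * (((1 : A) ⊗ₜ[k] b₂) ⊗ₜ[k] (1 : A))) ∧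
    (∀ a₁ a₂ b c : A, wk12 D.br (a₁ * a₂) b c
      = ((a₁ ⊗ₜ[k] (1 : A)) ⊗ₜ[k] (1 : A)) * wk12 D.br a₂ b c
        + wk12 D.br a₁ b c * ((a₂ ⊗ₜ[k] (1 : A)) ⊗ₜ[k] (1 : A))) ∧
    (∀ Sgen : Set A, Algebra.adjoin k Sgen = ⊤ →
      ((∀ a b c : A, wk12 D.br a b c = 0) ↔
        ∀ s ∈ Sgen, ∀ t ∈ Sgen, ∀ u ∈ Sgen, wk12 D.br s t u = 0)) := by
  have hS' : RightStr S := hS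
  refine ⟨fun a b c₁ c₂ => wk_deriv3 D hS' a b c₁ c₂,
          fun a b₁ b₂ c => wk_deriv2 D hS' a b₁ b₂ c,
          fun a₁ a₂ b c => wk_deriv1 D hS' a₁ a₂ b c,
          fun Sgen hgen => ⟨fun h s _ t _ u _ => h s t u, fun h => ?_⟩⟩
  have memtop : ∀ x : A, x ∈ Algebra.adjoin k Sgen := by
    intro x; rw [hgen]; exact Algebra.mem_top
  have H1 : ∀ s ∈ Sgen, ∀ t ∈ Sgen, ∀ c : A, wk12 D.br s t c = 0 := by
    intro s hs t ht c
    refine Algebra.adjoin_induction (fun u hu => h s hs t ht u hu)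
      (fun r => ?_) (fun x y _ _ hx hy => ?_) (fun x y _ _ hx hy => ?_) (memtop c)
    · rw [Algebra.algebraMap_eq_smul_one, wk_smul3, wk_one3 D hS', smul_zero]
    · rw [wk_add3, hx, hy, add_zero]
    · rw [wk_deriv3 D hS', hx, hy, mul_zero, zero_mul, add_zero]
  have H2 : ∀ s ∈ Sgen, ∀ b c : A, wk12 D.br s b c = 0 := by
    intro s hs b
    refine Algebra.adjoin_induction (p := fun b _ => ∀ c : A, wk12 D.br s b c = 0)
      (fun t ht => H1 s hs t ht) (fun r c => ?_) (fun x y _ _ hx hy c => ?_)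
      (fun x y _ _ hx hy c => ?_) (memtop b)
    · rw [Algebra.algebraMap_eq_smul_one, wk_smul2, wk_one2 D hS', smul_zero]
    · rw [wk_add2, hx, hy, add_zero]
    · rw [wk_deriv2 D hS', hx, hy, mul_zero, zero_mul, add_zero]
  intro a b c
  refine Algebra.adjoin_induction (p := fun a _ => ∀ b c : A, wk12 D.br a b c = 0)
    (fun s hs => H2 s hs) (fun r b c => ?_) (fun x y _ _ hx hy b c => ?_)
    (fun x y _ _ hx hy b c => ?_) (memtop a) b c
  · rw [Algebra.algebraMap_eq_smul_one, wk_smul1, wk_one1 D hS', smul_zero]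
  · rw [wk_add1, hx, hy, add_zero]
  · rw [wk_deriv1 D hS', hx, hy, mul_zero, zero_mul, add_zero]
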